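/- Let A = [[Id₂,0],[0,R(θ)]] ∈ GL(4,ℝ) where R(θ) is the rotation matrix by angle θ with sin θ ≠ 0. Then for X ∈ GL(4,ℝ) with columns x₁,x₂,x₃,x₄, the matrix XᵗX commutes with A if and only if xᵢ ⊥ xⱼ for i ∈ {1,2}, j ∈ {3,4}, x₃ ⊥ x₄, and ‖x₃‖ = ‖x₄‖. -/

import Mathlib

open Matrix Real

noncomputable def Amat (θ : ℝ) : Matrix (Fin 4) (Fin 4) ℝ :=
  !![1, 0, 0, 0; 0, 1, 0, 0; 0, 0, cos θ, -sin θ; 0, 0, sin θ, cos θ]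

lemma aux15 (s c b d : ℝ) (hs : s ≠ 0) (hp : s ^ 2 + c ^ 2 = 1)
    (h1 : b * c + d * s = b) (h2 : -(b * s) + d * c = d) : b = 0 ∧ d = 0 := by
  have hc : c ≠ 1 := by
    intro h
    apply hs
    nlinarith [sq_nonneg s]
  have hb : b * (2 - 2 * c) = 0 := by linear_combination (c - 1) * h1 - s * h2 - b * hp
  have hb0 : b = 0 := by
    rcases mul_eq_zero.mp hb with h | h
    · exact h
    · exact absurd (by linarith : c = 1) hc
  refine ⟨hb0, ?_⟩
  have : d * s = 0 := by linear_combination h1 - c * hb0 + hb0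
  rcases mul_eq_zero.mp this with h | h
  · exact h
  · exact absurd h hs

/-- For `A = [[Id₂,0],[0,R(θ)]]` with `sin θ ≠ 0` and `X ∈ GL(4,ℝ)` with columns
`x₁,x₂,x₃,x₄`, the matrix `XᵗX` commutes with `A` iff `xᵢ ⊥ xⱼ` for `i ∈ {1,2}`,
`j ∈ {3,4}`, `x₃ ⊥ x₄` and `‖x₃‖ = ‖x₄‖` (i.e. `x₃⬝x₃ = x₄⬝x₄`). -/
theorem stmt15 (θ : ℝ) (hθ : sin θ ≠ 0) (X : GL (Fin 4) ℝ) :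
    ((X : Matrix (Fin 4) (Fin 4) ℝ)ᵀ * X) * Amat θ =
        Amat θ * ((X : Matrix (Fin 4) (Fin 4) ℝ)ᵀ * X) ↔
      (∀ i j : Fin 4, (i : ℕ) < 2 → 2 ≤ (j : ℕ) →
          (fun k => (X : Matrix (Fin 4) (Fin 4) ℝ) k i) ⬝ᵥ
            (fun k => (X : Matrix (Fin 4) (Fin 4) ℝ) k j) = 0) ∧
      (fun k => (X : Matrix (Fin 4) (Fin 4) ℝ) k 2) ⬝ᵥ
          (fun k => (X : Matrix (Fin 4) (Fin 4) ℝ) k 3) = 0 ∧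
      (fun k => (X : Matrix (Fin 4) (Fin 4) ℝ) k 2) ⬝ᵥ
          (fun k => (X : Matrix (Fin 4) (Fin 4) ℝ) k 2) =
        (fun k => (X : Matrix (Fin 4) (Fin 4) ℝ) k 3) ⬝ᵥ
          (fun k => (X : Matrix (Fin 4) (Fin 4) ℝ) k 3) := by
  set B := (X : Matrix (Fin 4) (Fin 4) ℝ)ᵀ * (X : Matrix (Fin 4) (Fin 4) ℝ) with hBdef
  have hBe : ∀ i j : Fin 4, B i j =
      (fun k => (X : Matrix (Fin 4) (Fin 4) ℝ) k i) ⬝ᵥ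
        (fun k => (X : Matrix (Fin 4) (Fin 4) ℝ) k j) := by
    intro i j
    simp [hBdef, Matrix.mul_apply, dotProduct, Matrix.transpose_apply]
  have hsym : ∀ i j : Fin 4, B j i = B i j := by
    intro i j
    rw [hBe, hBe, dotProduct_comm]
  have hp : sin θ ^ 2 + cos θ ^ 2 = 1 := sin_sq_add_cos_sq θ
  constructor
  · intro h
    have e : ∀ i j : Fin 4, (B * Amat θ) i j = (Amat θ * B) i j := fun i j => by rw [h]
    have e02 := e 0 2
    have e03 := e 0 3
    have e12 := e 1 2
    have e13 := e 1 3
    have e22 := e 2 2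
    have e23 := e 2 3
    simp [Amat, Matrix.mul_apply, Fin.sum_univ_four] at e02 e03 e12 e13 e22 e23
    have h0 := aux15 (sin θ) (cos θ) (B 0 2) (B 0 3) hθ hp (by linarith) (by linarith)
    have h1 := aux15 (sin θ) (cos θ) (B 1 2) (B 1 3) hθ hp (by linarith) (by linarith)
    have h23 : B 2 3 = 0 := by
      have hs := hsym 2 3
      have : B 2 3 * (2 * sin θ) = 0 := by linear_combination e22 - sin θ * hs
      rcases mul_eq_zero.mp this with h' | h'
      · exact h'
      · exact absurd (by linarith) hθ
    have h22 : B 2 2 = B 3 3 := by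
      have : (B 3 3 - B 2 2) * sin θ = 0 := by linear_combination e23
      rcases mul_eq_zero.mp this with h' | h'
      · linarith
      · exact absurd h' hθ
    refine ⟨?_, ?_, ?_⟩
    · intro i j hi hj
      rw [← hBe]
      fin_cases i <;> fin_cases j <;> simp_all
    · rw [← hBe]; exact h23
    · rw [← hBe, ← hBe]; exact h22
  · rintro ⟨h1, h2, h3⟩
    have b02 : B 0 2 = 0 := by rw [hBe]; exact h1 0 2 (by decide) (by decide)
    have b03 : B 0 3 = 0 := by rw [hBe]; exact h1 0 3 (by decide) (by decide)
    have b12 : B 1 2 = 0 := by rw [hBe]; exact h1 1 2 (by decide) (by decide)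
    have b13 : B 1 3 = 0 := by rw [hBe]; exact h1 1 3 (by decide) (by decide)
    have b23 : B 2 3 = 0 := by rw [hBe]; exact h2
    have b22 : B 2 2 = B 3 3 := by rw [hBe, hBe]; exact h3
    have b20 : B 2 0 = 0 := by rw [hsym]; exact b02
    have b30 : B 3 0 = 0 := by rw [hsym]; exact b03
    have b21 : B 2 1 = 0 := by rw [hsym]; exact b12
    have b31 : B 3 1 = 0 := by rw [hsym]; exact b13
    have b32 : B 3 2 = 0 := by rw [hsym]; exact b23
    ext i j
    fin_cases i <;> fin_cases j <;>
      simp [Amat, Matrix.mul_apply, Fin.sum_univ_four, Matrix.vecHead, Matrix.vecTail,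
        b02, b03, b12, b13, b23, b20, b30, b21, b31, b32]
    all_goals (try ring)
    all_goals (
      first
        | (rw [b22]; ring))
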